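/- Define S_m = D_{m+1} − D_m. Then for every j ≥ 0 one has S_j = S_{p−1−S_j} (which makes sense since 0 ≤ S_j ≤ p−2, so 1 ≤ p−1−S_j ≤ p−1). -/

import Mathlib

open MeasureTheory
open scoped NNReal ENNReal

namespace Chacon

/-- The space of digit sequences with digits in `{0, …, p-1}`. -/
def Gamma (p : ℕ) : Set (ℕ → ℕ) := {x | ∀ i, x i < p}

/-- `Γ*`: sequences with digits `< p` having infinitely many coordinates `≠ p - 1`. -/
def GammaStar (p : ℕ) : Set (ℕ → ℕ) :=
  {x | (∀ i, x i < p) ∧ {i | x i ≠ p - 1}.Infinite}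

/-- The least index `i` with `x i ≠ p - 1`. -/
noncomputable def firstNot (p : ℕ) (x : ℕ → ℕ) : ℕ :=
  sInf {i | x i ≠ p - 1}

/-- `φ(x) = x_i` where `i` is the least index with `x_i ≠ p - 1`. -/
noncomputable def phi (p : ℕ) (x : ℕ → ℕ) : ℕ :=
  x (firstNot p x)

/-- The odometer `S` (addition of `1` with carry): the initial run of digits
`p - 1` is replaced by zeros, and the first digit `≠ p - 1` is increased by one. -/
noncomputable def odo (p : ℕ) (x : ℕ → ℕ) : ℕ → ℕ :=
  fun i =>
    if i < firstNot p x then 0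
    else if i = firstNot p x then x i + 1
    else x i

/-- `φ^(m)(x) = ∑_{j=0}^{m-1} φ(S^j x)`. -/
noncomputable def phiSum (p m : ℕ) (x : ℕ → ℕ) : ℕ :=
  ∑ j ∈ Finset.range m, phi p ((odo p)^[j] x)

/-- auxiliary digit weight -/
def gd (p r : ℕ) : ℕ := if r = p - 1 then p - 2 else r

/-- the max value of `phiSum p m` for `m ≤ p` -/
def V (p m : ℕ) : ℕ := ∑ j ∈ Finset.range m, gd p (p - m + j)

section comb
variable {p : ℕ}

lemma firstNot_spec {x : ℕ → ℕ} (h : {i | x i ≠ p - 1}.Nonempty) :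
    x (firstNot p x) ≠ p - 1 := Nat.sInf_mem h

lemma firstNot_min {x : ℕ → ℕ} {i : ℕ} (h : i < firstNot p x) : x i = p - 1 := by
  have := Nat.notMem_of_lt_sInf (s := {i | x i ≠ p - 1}) h
  simpa using this

lemma firstNot_eq_zero {x : ℕ → ℕ} (h : x 0 ≠ p - 1) : firstNot p x = 0 :=
  Nat.sInf_eq_zero.mpr (Or.inl h)

lemma firstNot_eq_one {x : ℕ → ℕ} (h0 : x 0 = p - 1) (h1 : x 1 ≠ p - 1) :
    firstNot p x = 1 := by
  have h1' : (1 : ℕ) ∈ {i | x i ≠ p - 1} := h1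
  refine le_antisymm (Nat.sInf_le h1') ?_
  rcases Nat.eq_zero_or_pos (firstNot p x) with h | h
  · rcases Nat.sInf_eq_zero.mp h with h' | h'
    · exact absurd h0 h'
    · exact absurd (Set.eq_empty_iff_forall_notMem.mp h' 1) (by simpa using h1)
  · exact h

lemma gammaStar_nonempty {x : ℕ → ℕ} (hx : x ∈ GammaStar p) :
    {i | x i ≠ p - 1}.Nonempty := hx.2.nonempty

lemma odo_mem_gammaStar (hp : 3 ≤ p) {x : ℕ → ℕ} (hx : x ∈ GammaStar p) :
    odo p x ∈ GammaStar p := by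
  obtain ⟨hlt, hinf⟩ := hx
  constructor
  · intro i
    unfold odo
    split_ifs with h1 h2
    · omega
    · have hne : x i ≠ p - 1 := by rw [h2]; exact firstNot_spec hinf.nonempty
      have h3 := hlt i
      omega
    · exact hlt i
  · have hsub : {i | x i ≠ p - 1} \ Set.Iic (firstNot p x) ⊆ {i | odo p x i ≠ p - 1} := by
      rintro i ⟨hmem, hle⟩
      simp only [Set.mem_Iic, not_le] at hle
      simp only [Set.mem_setOf_eq]
      unfold odo
      rw [if_neg (by omega), if_neg (by omega)]
      exact hmem
    exact (hinf.diff (Set.finite_Iic _)).mono hsub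

lemma iterate_mem_gammaStar (hp : 3 ≤ p) {x : ℕ → ℕ} (hx : x ∈ GammaStar p) (j : ℕ) :
    (odo p)^[j] x ∈ GammaStar p := by
  induction j with
  | zero => exact hx
  | succ n ih => rw [Function.iterate_succ_apply']; exact odo_mem_gammaStar hp ih

lemma phi_lt {x : ℕ → ℕ} (hx : x ∈ GammaStar p) : phi p x ≤ p - 2 := by
  have h1 := firstNot_spec (gammaStar_nonempty hx)
  have h2 := hx.1 (firstNot p x)
  unfold phi
  omega

lemma phi_le_gd {x : ℕ → ℕ} (hx : x ∈ GammaStar p) : phi p x ≤ gd p (x 0) := by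
  by_cases h : x 0 = p - 1
  · have := phi_lt hx
    simp [gd, h, this]
  · have h0 : firstNot p x = 0 := firstNot_eq_zero h
    simp [gd, h, phi, h0]

lemma odo_zero_digit (hp : 3 ≤ p) {x : ℕ → ℕ} (hx : x ∈ GammaStar p) :
    odo p x 0 = (x 0 + 1) % p := by
  by_cases h : x 0 = p - 1
  · have hfn : firstNot p x ≠ 0 := by
      intro h0
      exact (by simpa [h0, h] using firstNot_spec (gammaStar_nonempty hx))
    have hpos : (0 : ℕ) < firstNot p x := Nat.pos_of_ne_zero hfn
    unfold odo
    rw [if_pos hpos, h]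
    rw [show p - 1 + 1 = p by omega, Nat.mod_self]
  · have h0 : firstNot p x = 0 := firstNot_eq_zero h
    have h1 := hx.1 0
    unfold odo
    rw [h0]
    simp only [Nat.lt_irrefl, if_false, if_pos trivial, if_true]
    exact (Nat.mod_eq_of_lt (by omega)).symm

lemma iterate_zero_digit (hp : 3 ≤ p) {x : ℕ → ℕ} (hx : x ∈ GammaStar p) (j : ℕ) :
    (odo p)^[j] x 0 = (x 0 + j) % p := by
  induction j with
  | zero => simpa using (Nat.mod_eq_of_lt (hx.1 0)).symm
  | succ n ih =>
      rw [Function.iterate_succ_apply']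
      rw [odo_zero_digit hp (iterate_mem_gammaStar hp hx n), ih]
      rw [show x 0 + (n+1) = (x 0 + n) + 1 by ring, Nat.mod_add_mod]

lemma gd_mono (hp : 3 ≤ p) {a b : ℕ} (hab : a ≤ b) (hb : b ≤ p - 1) :
    gd p a ≤ gd p b := by
  unfold gd
  split_ifs with h1 h2 <;> omega

lemma gd_le (hp : 3 ≤ p) {r : ℕ} (hr : r ≤ p - 1) : gd p r ≤ p - 2 := by
  unfold gd; split_ifs <;> omega

lemma sum_range_split (f : ℕ → ℕ) {w m : ℕ} (h : w ≤ m) :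
    ∑ j ∈ Finset.range m, f j
      = ∑ j ∈ Finset.range w, f j + ∑ j ∈ Finset.range (m - w), f (w + j) := by
  conv_lhs => rw [show m = w + (m - w) by omega]
  exact Finset.sum_range_add f w (m - w)

/-- max of the window sums -/
lemma sum_gd_mod_le (hp : 3 ≤ p) {m c : ℕ} (hm : m ≤ p) (hc : c < p) :
    ∑ j ∈ Finset.range m, gd p ((c + j) % p) ≤ V p m := by
  by_cases hw : c + m ≤ p
  · -- no wrap
    calc ∑ j ∈ Finset.range m, gd p ((c + j) % p)
        = ∑ j ∈ Finset.range m, gd p (c + j) := by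
          refine Finset.sum_congr rfl fun j hj => ?_
          rw [Nat.mod_eq_of_lt (by simp at hj; omega)]
      _ ≤ ∑ j ∈ Finset.range m, gd p (p - m + j) := by
          refine Finset.sum_le_sum fun j hj => ?_
          simp only [Finset.mem_range] at hj
          exact gd_mono hp (by omega) (by omega)
      _ = V p m := rfl
  · -- wrap: let w = p - c steps before wrap
    push_neg at hw
    set w : ℕ := p - c with hwdef
    have hwm : w ≤ m := by omega
    have hL : ∑ j ∈ Finset.range m, gd p ((c + j) % p)
        = (∑ j ∈ Finset.range w, gd p (p - w + j)) + ∑ j ∈ Finset.range (m - w), gd p j := by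
      rw [sum_range_split _ hwm]
      congr 1
      · refine Finset.sum_congr rfl fun j hj => ?_
        simp only [Finset.mem_range] at hj
        rw [Nat.mod_eq_of_lt (by omega)]
        congr 1
        omega
      · refine Finset.sum_congr rfl fun j hj => ?_
        simp only [Finset.mem_range] at hj
        have h2 : c + (w + j) = p + j := by omega
        rw [h2, Nat.add_mod_left, Nat.mod_eq_of_lt (by omega)]
    have hV : V p m = (∑ j ∈ Finset.range (m - w), gd p (p - m + j))
        + ∑ j ∈ Finset.range w, gd p (p - w + j) := by
      unfold V
      rw [sum_range_split _ (show m - w ≤ m by omega)]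
      congr 1
      · rw [show m - (m - w) = w by omega]
        refine Finset.sum_congr rfl fun j hj => ?_
        congr 1
        omega
    rw [hL, hV, add_comm]
    gcongr with j hj
    simp only [Finset.mem_range] at hj
    exact gd_mono hp (by omega) (by omega)

lemma phiSum_le_V (hp : 3 ≤ p) {x : ℕ → ℕ} (hx : x ∈ GammaStar p) {m : ℕ} (hm : m ≤ p) :
    phiSum p m x ≤ V p m := by
  calc phiSum p m x ≤ ∑ j ∈ Finset.range m, gd p ((x 0 + j) % p) := by
        refine Finset.sum_le_sum fun j hj => ?_
        have h1 := phi_le_gd (iterate_mem_gammaStar hp hx j)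
        rwa [iterate_zero_digit hp hx j] at h1
    _ ≤ V p m := sum_gd_mod_le hp hm (hx.1 0)

lemma phiSum_le (hp : 3 ≤ p) {x : ℕ → ℕ} (hx : x ∈ GammaStar p) (m : ℕ) :
    phiSum p m x ≤ m * (p - 2) := by
  unfold phiSum
  calc ∑ j ∈ Finset.range m, phi p ((odo p)^[j] x)
      ≤ ∑ _j ∈ Finset.range m, (p - 2) :=
        Finset.sum_le_sum fun j _ => phi_lt (iterate_mem_gammaStar hp hx j)
    _ = m * (p - 2) := by simp [mul_comm]

lemma odo_of_first_ne {x : ℕ → ℕ} (h : x 0 ≠ p - 1) :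
    odo p x = Function.update x 0 (x 0 + 1) := by
  have h0 : firstNot p x = 0 := firstNot_eq_zero h
  funext i
  unfold odo
  rw [h0]
  rcases Nat.eq_zero_or_pos i with hi | hi
  · subst hi; simp
  · rw [if_neg (by omega), if_neg (by omega), Function.update_of_ne (by omega)]

/-- exact value of phiSum on the maximizing cylinder -/
lemma phiSum_cylinder (hp : 3 ≤ p) {m : ℕ} (hm1 : 1 ≤ m) (hmp : m ≤ p)
    {x : ℕ → ℕ} (hx0 : x 0 = p - m) (hx1 : x 1 = p - 2) :
    phiSum p m x = V p m := by
  have key : ∀ j, j ≤ m - 1 → (odo p)^[j] x = Function.update x 0 (p - m + j) := by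
    intro j hj
    induction j with
    | zero => simpa [← hx0] using (Function.update_eq_self 0 x).symm
    | succ n ih =>
        have hn : n ≤ m - 1 := by omega
        rw [Function.iterate_succ_apply', ih hn]
        have hne : Function.update x 0 (p - m + n) 0 ≠ p - 1 := by
          rw [Function.update_self]; omega
        rw [odo_of_first_ne hne]
        rw [Function.update_self]
        rw [Function.update_idem]
        congr 1
  unfold phiSum
  have hval : ∀ j ∈ Finset.range m, phi p ((odo p)^[j] x) = gd p (p - m + j) := by
    intro j hj
    simp only [Finset.mem_range] at hj
    rw [key j (by omega)]
    by_cases hlast : j = m - 1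
    · subst hlast
      have h0 : Function.update x 0 (p - m + (m-1)) 0 = p - 1 := by
        rw [Function.update_self]; omega
      have h1 : Function.update x 0 (p - m + (m-1)) 1 = p - 2 := by
        rw [Function.update_of_ne (by omega)]; exact hx1
      unfold phi
      rw [firstNot_eq_one h0 (by omega), h1]
      have : p - m + (m - 1) = p - 1 := by omega
      rw [this]
      simp [gd]
    · have h0 : Function.update x 0 (p - m + j) 0 = p - m + j := Function.update_self _ _ _
      have hne : Function.update x 0 (p - m + j) 0 ≠ p - 1 := by rw [h0]; omega
      unfold phi
      rw [firstNot_eq_zero hne, h0]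
      unfold gd
      rw [if_neg (by omega)]
  exact Finset.sum_congr rfl hval

/-- recursion for V -/
lemma V_succ (hp : 3 ≤ p) {k : ℕ} (hk : 1 ≤ k) (hkp : k + 1 ≤ p) :
    V p (k + 1) = V p k + (p - 1 - k) := by
  unfold V
  rw [Finset.sum_range_succ']
  have e : ∀ j ∈ Finset.range k, gd p (p - (k+1) + (j+1)) = gd p (p - k + j) := by
    intro j hj
    congr 1
    omega
  rw [Finset.sum_congr rfl e]
  have : gd p (p - (k + 1) + 0) = p - 1 - k := by
    unfold gd
    rw [if_neg (by omega)]
    omega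
  rw [this]

end comb

/-- The base-`p` digit sequence of a real number `u`. -/
noncomputable def digitsOf (p : ℕ) (u : ℝ) : ℕ → ℕ :=
  fun i => (⌊u * (p : ℝ) ^ (i + 1)⌋).toNat % p

section digits
variable {p : ℕ}

lemma digitsOf_lt (hp : 3 ≤ p) (u : ℝ) (i : ℕ) : digitsOf p u i < p :=
  Nat.mod_lt _ (by omega)

lemma digitsOf_eq_natFloor {u : ℝ} (hu : 0 ≤ u) (i : ℕ) :
    digitsOf p u i = ⌊u * (p : ℝ) ^ (i + 1)⌋₊ % p := by
  unfold digitsOf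
  rw [Int.floor_toNat]

lemma digit_rec (hp : 3 ≤ p) {u : ℝ} (hu : 0 ≤ u) (i : ℕ) :
    ⌊u * (p : ℝ) ^ (i + 1)⌋₊ = p * ⌊u * (p : ℝ) ^ i⌋₊ + digitsOf p u i := by
  have hp0 : (0 : ℝ) < p := by positivity
  have hdiv : u * (p : ℝ) ^ (i + 1) / p = u * (p : ℝ) ^ i := by
    field_simp
    ring
  have h1 : ⌊u * (p : ℝ) ^ i⌋₊ = ⌊u * (p : ℝ) ^ (i + 1)⌋₊ / p := by
    rw [← hdiv, Nat.floor_div_natCast]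
  rw [digitsOf_eq_natFloor hu, h1]
  exact (Nat.div_add_mod _ p).symm

lemma digitsOf_mem_gammaStar (hp : 3 ≤ p) {u : ℝ} (hu : 0 ≤ u) :
    digitsOf p u ∈ GammaStar p := by
  refine ⟨digitsOf_lt hp u, ?_⟩
  by_contra hfin
  rw [Set.not_infinite] at hfin
  obtain ⟨N, hN⟩ := hfin.bddAbove
  have hall : ∀ i, digitsOf p u (N + 1 + i) = p - 1 := by
    intro i
    by_contra hne
    have : N + 1 + i ≤ N := hN hne
    omega
  set A : ℕ → ℕ := fun i => ⌊u * (p : ℝ) ^ i⌋₊ with hA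
  have hrec : ∀ t : ℕ, A (N + 2 + t) + 1 = p ^ t * (A (N + 2) + 1) := by
    intro t
    induction t with
    | zero => simp
    | succ n ih =>
        have h1 : A (N + 2 + (n + 1)) = p * A (N + 2 + n) + (p - 1) := by
          have := digit_rec hp hu (N + 1 + (n + 1))
          rw [hall (n + 1)] at this
          have harg : N + 1 + (n + 1) + 1 = N + 2 + (n + 1) := by omega
          have harg2 : N + 1 + (n + 1) = N + 2 + n := by omega
          rw [harg, harg2] at this
          exact this
        have h2 : A (N + 2 + (n + 1)) + 1 = p * (A (N + 2 + n) + 1) := by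
          rw [h1, Nat.mul_add, mul_one]
          omega
        rw [h2, ih]
        ring
  set M : ℕ := N + 2 with hM
  have hδpos : (0 : ℝ) < (A M + 1 : ℝ) - u * (p : ℝ) ^ M := by
    have h := Nat.lt_floor_add_one (u * (p : ℝ) ^ M)
    simp only [hA]
    linarith
  set δ : ℝ := (A M + 1 : ℝ) - u * (p : ℝ) ^ M with hδ
  have hkey : ∀ t : ℕ, (p : ℝ) ^ t * δ ≤ 1 := by
    intro t
    have hfl : (A (M + t) : ℝ) ≤ u * (p : ℝ) ^ (M + t) :=
      Nat.floor_le (by positivity)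
    have heq : ((A (M + t) : ℕ) : ℝ) + 1 = (p : ℝ) ^ t * ((A M : ℝ) + 1) := by
      have h := hrec t
      have h2 : ((A (N + 2 + t) + 1 : ℕ) : ℝ) = ((p ^ t * (A (N + 2) + 1) : ℕ) : ℝ) := by
        exact_mod_cast congrArg (Nat.cast : ℕ → ℝ) h
      push_cast at h2
      simpa [hM] using h2
    have hpow : u * (p : ℝ) ^ (M + t) = (u * (p : ℝ) ^ M) * (p : ℝ) ^ t := by
      rw [pow_add]; ring
    have : (p : ℝ) ^ t * ((A M : ℝ) + 1) - 1 ≤ (u * (p : ℝ) ^ M) * (p : ℝ) ^ t := by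
      rw [← heq, ← hpow]; linarith
    have hexp : (p : ℝ) ^ t * δ = (p : ℝ) ^ t * ((A M : ℝ) + 1) - (u * (p : ℝ) ^ M) * (p : ℝ) ^ t := by
      rw [hδ]; ring
    rw [hexp]
    linarith
  obtain ⟨t, ht⟩ := pow_unbounded_of_one_lt (δ⁻¹) (show (1:ℝ) < p by exact_mod_cast by omega)
  have h1 : 1 < (p : ℝ) ^ t * δ := by
    rw [← inv_mul_cancel₀ (ne_of_gt hδpos)]
    exact mul_lt_mul_of_pos_right ht hδpos
  linarith [hkey t]

/-- two-digit cylinder control -/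
lemma digits01 (hp : 3 ≤ p) {d0 d1 : ℕ} (h0 : d0 < p) (h1 : d1 < p) {u : ℝ}
    (hl : ((d0 * p + d1 : ℕ) : ℝ) / (p : ℝ) ^ 2 ≤ u)
    (hr : u < (((d0 * p + d1 : ℕ) : ℝ) + 1) / (p : ℝ) ^ 2) :
    digitsOf p u 0 = d0 ∧ digitsOf p u 1 = d1 ∧ 0 ≤ u ∧ u < 1 := by
  have hp0 : (0 : ℝ) < p := by positivity
  have hp2 : (0 : ℝ) < (p : ℝ) ^ 2 := by positivity
  set K : ℕ := d0 * p + d1 with hK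
  have hK2 : K + 1 ≤ p ^ 2 := by
    have : d0 * p + d1 + 1 ≤ (p - 1) * p + p := by
      have := Nat.mul_le_mul_right p (show d0 ≤ p - 1 by omega)
      omega
    calc K + 1 ≤ (p - 1) * p + p := this
      _ = p ^ 2 - p + p := by rw [Nat.sub_mul, one_mul, pow_two]
      _ = p ^ 2 := by
          have : p ≤ p ^ 2 := by nlinarith
          omega
  have hu0 : 0 ≤ u := le_trans (by positivity) hl
  have hu1 : u < 1 := by
    have hKr : ((K : ℝ) + 1) ≤ (p : ℝ) ^ 2 := by exact_mod_cast hK2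
    calc u < ((K : ℝ) + 1) / (p : ℝ) ^ 2 := hr
      _ ≤ (p : ℝ) ^ 2 / (p : ℝ) ^ 2 := by gcongr
      _ = 1 := div_self (ne_of_gt hp2)
  -- digit 1
  have hf2 : ⌊u * (p : ℝ) ^ (1 + 1)⌋ = (K : ℤ) := by
    rw [Int.floor_eq_iff]
    constructor
    · push_cast
      calc ((K : ℝ)) = (K : ℝ) / (p : ℝ) ^ 2 * (p : ℝ) ^ 2 := by field_simp
        _ ≤ u * (p : ℝ) ^ (1 + 1) := by
            rw [show ((1:ℕ) + 1 : ℕ) = 2 by rfl]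
            exact mul_le_mul_of_nonneg_right hl (le_of_lt hp2)
    · push_cast
      calc u * (p : ℝ) ^ (1 + 1) < (((K : ℝ) + 1) / (p : ℝ) ^ 2) * (p : ℝ) ^ 2 := by
            rw [show ((1:ℕ) + 1 : ℕ) = 2 by rfl]
            exact mul_lt_mul_of_pos_right hr hp2
        _ = (K : ℝ) + 1 := by field_simp
  have hd1 : digitsOf p u 1 = d1 := by
    unfold digitsOf
    rw [hf2]
    simp only [Int.toNat_natCast]
    rw [hK, Nat.mul_comm, Nat.mul_add_mod]
    exact Nat.mod_eq_of_lt h1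
  -- digit 0
  have hf1 : ⌊u * (p : ℝ) ^ (0 + 1)⌋ = (d0 : ℤ) := by
    rw [Int.floor_eq_iff]
    have hup : u * (p : ℝ) ^ (0 + 1) = u * p := by norm_num
    constructor
    · push_cast
      rw [hup]
      have h2 : ((K : ℝ)) / (p : ℝ) ≤ u * p := by
        calc (K : ℝ) / p = (K : ℝ) / (p : ℝ) ^ 2 * p := by field_simp
          _ ≤ u * p := mul_le_mul_of_nonneg_right hl hp0.le
      have h4 : (d0 : ℝ) ≤ (K : ℝ) / p := by
        rw [le_div_iff₀ hp0]
        exact_mod_cast Nat.le_add_right (d0 * p) d1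
      linarith
    · push_cast
      rw [hup]
      have h2 : u * p < ((K : ℝ) + 1) / p := by
        calc u * p < ((K : ℝ) + 1) / (p : ℝ) ^ 2 * p := mul_lt_mul_of_pos_right hr hp0
          _ = ((K : ℝ) + 1) / p := by field_simp
      have hn : K + 1 ≤ (d0 + 1) * p := by
        have e : (d0 + 1) * p = d0 * p + p := by ring
        omega
      have h4 : ((K : ℝ) + 1) / p ≤ (d0 : ℝ) + 1 := by
        rw [div_le_iff₀ hp0]
        exact_mod_cast hn
      linarith
  have hd0 : digitsOf p u 0 = d0 := by
    unfold digitsOf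
    rw [hf1]
    simp only [Int.toNat_natCast]
    exact Nat.mod_eq_of_lt h0
  exact ⟨hd0, hd1, hu0, hu1⟩

end digits

section meas
variable {p : ℕ}

lemma firstNot_eq_iff (p : ℕ) (x : ℕ → ℕ) (n : ℕ) :
    firstNot p x = n ↔
      ((x n ≠ p - 1 ∧ ∀ i < n, x i = p - 1) ∨ (n = 0 ∧ ∀ i, x i = p - 1)) := by
  constructor
  · intro h
    by_cases hne : {i | x i ≠ p - 1}.Nonempty
    · left
      refine ⟨h ▸ firstNot_spec hne, fun i hi => firstNot_min (h ▸ hi : i < firstNot p x)⟩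
    · right
      rw [Set.not_nonempty_iff_eq_empty] at hne
      have hall : ∀ i, x i = p - 1 := by
        intro i
        by_contra hc
        have hmem : i ∈ {i | x i ≠ p - 1} := hc
        rw [hne] at hmem
        exact absurd hmem (Set.notMem_empty i)
      refine ⟨?_, hall⟩
      rw [← h]
      unfold firstNot
      rw [hne, Nat.sInf_empty]
  · rintro (⟨h1, h2⟩ | ⟨h1, h2⟩)
    · refine le_antisymm (Nat.sInf_le h1) ?_
      by_contra hc
      push_neg at hc
      exact firstNot_spec ⟨n, h1⟩ (h2 _ hc)
    · subst h1
      unfold firstNot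
      rw [show {i | x i ≠ p - 1} = ∅ from Set.eq_empty_iff_forall_notMem.mpr
        (by intro i; simp [h2 i]), Nat.sInf_empty]

lemma measurableSet_digit_eq (i c : ℕ) : MeasurableSet {x : ℕ → ℕ | x i = c} := by
  have h : {x : ℕ → ℕ | x i = c} = (fun x : ℕ → ℕ => x i) ⁻¹' {c} := rfl
  rw [h]
  exact measurable_pi_apply i trivial

lemma measurable_firstNot : Measurable (firstNot p) := by
  apply measurable_to_countable'
  intro n
  have : firstNot p ⁻¹' {n} =
      ({x : ℕ → ℕ | x n ≠ p - 1} ∩ ⋂ i ∈ Set.Iio n, {x : ℕ → ℕ | x i = p - 1})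
      ∪ (if n = 0 then ⋂ i, {x : ℕ → ℕ | x i = p - 1} else ∅) := by
    ext x
    simp only [Set.mem_preimage, Set.mem_singleton_iff, firstNot_eq_iff, Set.mem_union,
      Set.mem_inter_iff, Set.mem_setOf_eq, Set.mem_iInter, Set.mem_Iio]
    by_cases hn : n = 0 <;> simp [hn]
  rw [this]
  have hne : MeasurableSet {x : ℕ → ℕ | x n ≠ p - 1} :=
    (measurableSet_digit_eq n (p - 1)).compl
  apply MeasurableSet.union
  · exact hne.inter (MeasurableSet.biInter (Set.to_countable _)
        fun i _ => measurableSet_digit_eq i (p - 1))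
  · split_ifs
    · exact MeasurableSet.iInter fun i => measurableSet_digit_eq i (p - 1)
    · exact MeasurableSet.empty

lemma measurable_phi : Measurable (phi p) := by
  apply measurable_to_countable'
  intro c
  have : phi p ⁻¹' {c} = ⋃ n, (firstNot p ⁻¹' {n} ∩ {x : ℕ → ℕ | x n = c}) := by
    ext x
    simp only [Set.mem_preimage, Set.mem_singleton_iff, Set.mem_iUnion, Set.mem_inter_iff,
      Set.mem_setOf_eq, phi]
    exact ⟨fun h => ⟨firstNot p x, rfl, h⟩, fun ⟨n, h1, h2⟩ => h1 ▸ h2⟩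
  rw [this]
  exact MeasurableSet.iUnion fun n =>
    (measurable_firstNot (trivial : MeasurableSet ({n} : Set ℕ))).inter
      (measurableSet_digit_eq n c)

lemma measurable_odo : Measurable (odo p) := by
  apply measurable_pi_lambda
  intro i
  show Measurable fun x : ℕ → ℕ =>
    if i < firstNot p x then 0 else if i = firstNot p x then x i + 1 else x i
  have h1 : MeasurableSet {x : ℕ → ℕ | i < firstNot p x} :=
    measurable_firstNot (trivial : MeasurableSet {n : ℕ | i < n})
  have h2 : MeasurableSet {x : ℕ → ℕ | i = firstNot p x} :=
    measurable_firstNot (trivial : MeasurableSet {n : ℕ | i = n})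
  exact Measurable.ite h1 measurable_const
    (Measurable.ite h2 ((measurable_from_top : Measurable (fun n : ℕ => n + 1)).comp (measurable_pi_apply i))
      (measurable_pi_apply i))

lemma measurable_phiSum (m : ℕ) : Measurable (phiSum p m) := by
  unfold phiSum
  exact Finset.measurable_sum _ fun j _ => measurable_phi.comp (measurable_odo.iterate j)

lemma measurable_digitsOf : Measurable (digitsOf p) := by
  apply measurable_pi_lambda
  intro i
  exact (measurable_from_top : Measurable (fun z : ℤ => z.toNat % p)).comp
    (Int.measurable_floor.comp (measurable_id.mul_const ((p : ℝ) ^ (i + 1))))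

end meas

/-- `λ`: the product probability measure on digit sequences under which the
coordinates are i.i.d., uniformly distributed in `{0, …, p-1}`; it is realized
concretely as the distribution of the base-`p` digit sequence of a uniformly
distributed random point of `[0,1)`. -/
noncomputable def lam (p : ℕ) : Measure (ℕ → ℕ) :=
  Measure.map (digitsOf p) (volume.restrict (Set.Ico (0 : ℝ) 1))

/-- `π_m(j) = λ({x : φ^(m)(x) = j})`. -/
noncomputable def pim (p m j : ℕ) : ℝ≥0∞ :=
  lam p {x | phiSum p m x = j}

/-- `P_m^p(t) = ∑_{j ≥ 0} π_m(j) t^j`, a real polynomial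
(the sum is over `0 ≤ j ≤ m (p-2)` since `0 ≤ φ^(m) ≤ m (p-2)` a.s.). -/
noncomputable def P (p m : ℕ) (t : ℝ) : ℝ :=
  ∑ j ∈ Finset.range (m * (p - 2) + 1), (pim p m j).toReal * t ^ j

/-- The `n`-th triangular number `Δ_n = n (n+1) / 2`. -/
def tri (n : ℕ) : ℕ := n * (n + 1) / 2

/-- The degree `D_m` of `P_m^p`: the largest `j` with `π_m(j) ≠ 0`. -/
noncomputable def D (p m : ℕ) : ℕ := sSup {j | pim p m j ≠ 0}

/-- The lower degree `d_m` of `P_m^p`: the least `j` with `π_m(j) ≠ 0`. -/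
noncomputable def d (p m : ℕ) : ℕ := sInf {j | pim p m j ≠ 0}


/-- `S_m = D_{m+1} - D_m`. -/
noncomputable def Sseq (p m : ℕ) : ℕ := D p (m + 1) - D p m

section final
variable {p : ℕ}

lemma phiSum_succ (p m : ℕ) (x : ℕ → ℕ) :
    phiSum p (m + 1) x = phiSum p m x + phi p ((odo p)^[m] x) := by
  unfold phiSum
  rw [Finset.sum_range_succ]

lemma pim_eq (m j : ℕ) :
    pim p m j = volume ({u : ℝ | phiSum p m (digitsOf p u) = j} ∩ Set.Ico (0 : ℝ) 1) := by
  unfold pim lam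
  have e : {x : ℕ → ℕ | phiSum p m x = j} = phiSum p m ⁻¹' {j} := rfl
  have hs : MeasurableSet (phiSum p m ⁻¹' ({j} : Set ℕ)) :=
    measurable_phiSum m (trivial : MeasurableSet ({j} : Set ℕ))
  rw [e, Measure.map_apply measurable_digitsOf hs,
    Measure.restrict_apply (measurable_digitsOf hs)]
  rfl

lemma pim_zero_of_V_lt (hp : 3 ≤ p) {m j : ℕ} (hm : m ≤ p) (hj : V p m < j) :
    pim p m j = 0 := by
  rw [pim_eq]
  have he : {u : ℝ | phiSum p m (digitsOf p u) = j} ∩ Set.Ico (0 : ℝ) 1 = ∅ := by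
    rw [Set.eq_empty_iff_forall_notMem]
    rintro u ⟨h1, h2, _⟩
    have hx := digitsOf_mem_gammaStar hp h2
    have := phiSum_le_V hp hx hm
    simp only [Set.mem_setOf_eq] at h1
    omega
  rw [he, measure_empty]

lemma pim_zero_of_big (hp : 3 ≤ p) {m j : ℕ} (hj : m * (p - 2) < j) :
    pim p m j = 0 := by
  rw [pim_eq]
  have he : {u : ℝ | phiSum p m (digitsOf p u) = j} ∩ Set.Ico (0 : ℝ) 1 = ∅ := by
    rw [Set.eq_empty_iff_forall_notMem]
    rintro u ⟨h1, h2, _⟩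
    have hx := digitsOf_mem_gammaStar hp h2
    have := phiSum_le hp hx m
    simp only [Set.mem_setOf_eq] at h1
    omega
  rw [he, measure_empty]

lemma bddAbove_pim (hp : 3 ≤ p) (m : ℕ) : BddAbove {j | pim p m j ≠ 0} := by
  refine ⟨m * (p - 2), fun j hj => ?_⟩
  by_contra hc
  push_neg at hc
  exact hj (pim_zero_of_big hp hc)

lemma pim_V_ne_zero (hp : 3 ≤ p) {m : ℕ} (hm1 : 1 ≤ m) (hmp : m ≤ p) :
    pim p m (V p m) ≠ 0 := by
  rw [pim_eq]
  set K : ℕ := (p - m) * p + (p - 2) with hK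
  have hp2 : (0 : ℝ) < (p : ℝ) ^ 2 := by positivity
  have hsub : Set.Ico ((K : ℝ) / (p : ℝ) ^ 2) (((K : ℝ) + 1) / (p : ℝ) ^ 2)
      ⊆ {u : ℝ | phiSum p m (digitsOf p u) = V p m} ∩ Set.Ico (0 : ℝ) 1 := by
    rintro u ⟨hl, hr⟩
    obtain ⟨e0, e1, hu0, hu1⟩ := digits01 hp (show p - m < p by omega)
      (show p - 2 < p by omega) hl hr
    have hx := digitsOf_mem_gammaStar hp hu0
    exact ⟨phiSum_cylinder hp hm1 hmp e0 e1, hu0, hu1⟩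
  have hle := measure_mono (μ := (volume : Measure ℝ)) hsub
  intro h0
  rw [h0, Real.volume_Ico] at hle
  have he : ((K : ℝ) + 1) / (p : ℝ) ^ 2 - (K : ℝ) / (p : ℝ) ^ 2 = 1 / (p : ℝ) ^ 2 := by
    field_simp
    ring
  rw [he] at hle
  have hpos : (0 : ℝ≥0∞) < ENNReal.ofReal (1 / (p : ℝ) ^ 2) :=
    ENNReal.ofReal_pos.mpr (by positivity)
  exact (ne_of_lt hpos).symm (le_antisymm hle zero_le)

lemma D_eq_V (hp : 3 ≤ p) {m : ℕ} (hm1 : 1 ≤ m) (hmp : m ≤ p) : D p m = V p m := by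
  unfold D
  apply le_antisymm
  · apply csSup_le'
    intro j hj
    simp only [Set.mem_setOf_eq] at hj
    by_contra hc
    push_neg at hc
    exact hj (pim_zero_of_V_lt hp hmp hc)
  · exact le_csSup (bddAbove_pim hp m) (pim_V_ne_zero hp hm1 hmp)

lemma D_succ_le (hp : 3 ≤ p) (m : ℕ) : D p (m + 1) ≤ D p m + (p - 2) := by
  unfold D
  apply csSup_le'
  intro j hj
  simp only [Set.mem_setOf_eq] at hj
  rw [pim_eq] at hj
  set U : ℕ → Set ℝ := fun j' =>
    {u : ℝ | phiSum p m (digitsOf p u) = j' ∧ phiSum p (m + 1) (digitsOf p u) = j}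
      ∩ Set.Ico (0 : ℝ) 1 with hU
  have hcov : {u : ℝ | phiSum p (m + 1) (digitsOf p u) = j} ∩ Set.Ico (0 : ℝ) 1
      ⊆ ⋃ j' ∈ Finset.range (j + 1), U j' := by
    rintro u ⟨h1, h2⟩
    simp only [Set.mem_setOf_eq] at h1
    have hle : phiSum p m (digitsOf p u) ≤ j := by
      rw [← h1, phiSum_succ]
      exact Nat.le_add_right _ _
    exact Set.mem_biUnion (Finset.mem_range.mpr (by omega)) ⟨⟨rfl, h1⟩, h2⟩
  have hsum := (measure_mono (μ := (volume : Measure ℝ)) hcov).trans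
    (measure_biUnion_finset_le _ _)
  have hex : ∃ j' ∈ Finset.range (j + 1), volume (U j') ≠ 0 := by
    by_contra hc
    push_neg at hc
    rw [Finset.sum_eq_zero hc] at hsum
    exact hj (le_antisymm hsum zero_le)
  obtain ⟨j', _, hj'⟩ := hex
  have hpim : pim p m j' ≠ 0 := by
    rw [pim_eq]
    intro h0
    apply hj'
    refine measure_mono_null ?_ h0
    rintro u ⟨⟨ha, _⟩, hb⟩
    exact ⟨ha, hb⟩
  obtain ⟨u, ⟨hu1, hu2⟩, huI⟩ := nonempty_of_measure_ne_zero hj'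
  have hx := digitsOf_mem_gammaStar hp huI.1
  have hphile := phi_lt (iterate_mem_gammaStar hp hx m)
  have hj_eq : j = j' + phi p ((odo p)^[m] (digitsOf p u)) := by
    rw [← hu2, phiSum_succ, hu1]
  have hD : j' ≤ sSup {j | pim p m j ≠ 0} := le_csSup (bddAbove_pim hp m) hpim
  omega

end final

/-- with `S_m = D_{m+1} - D_m`, for every `j ≥ 0`,
`S_j = S_{p-1-S_j}`. -/
theorem statement_13 (p : ℕ) (hp : 3 ≤ p) (j : ℕ) :
    Sseq p j = Sseq p (p - 1 - Sseq p j) := by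
  have hupper : ∀ n, Sseq p n ≤ p - 2 := by
    intro n
    unfold Sseq
    have := D_succ_le hp n
    omega
  have hv2 : Sseq p j ≤ p - 2 := hupper j
  set v := Sseq p j with hv
  set k := p - 1 - v with hk
  have hk1 : 1 ≤ k := by omega
  have hkp : k + 1 ≤ p := by omega
  have hSk : Sseq p k = p - 1 - k := by
    unfold Sseq
    rw [D_eq_V hp (by omega) hkp, D_eq_V hp hk1 (by omega), V_succ hp hk1 hkp]
    omega
  rw [hSk]
  omega


end Chacon
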